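/- Jacobi identity for Casoratians: let F be a field, let f₁, …, f_{k+1} and χ be arbitrary functions ℤ → F, and define the Casoratian of functions g₁, …, g_m by C(g₁,…,g_m)(z) := det(g_i(z+j−1))_{i,j=1,…,m}. Write (Tf)(z) := f(z+1) and [A,B] := A·(TB) − B·(TA) for functions A, B : ℤ → F. Set C_k := C(f₁,…,f_k), C_{k+1} := C(f₁,…,f_{k+1}), C_k(χ) := C(f₁,…,f_k,χ), and C_{k+1}(χ) := C(f₁,…,f_{k+1},χ). Then [C_k(χ), C_{k+1}] = −(TC_k)·C_{k+1}(χ) identically on ℤ. -/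

import Mathlib

open Matrix

section JacobiAux

set_option linter.unusedSectionVars false
set_option maxHeartbeats 1600000

variable {R : Type*} [CommRing R]

/-- Laplace expansion collapsed at a column with a single possibly-nonzero entry. -/
lemma updateColumn_comm {n : Type*} [DecidableEq n] [Fintype n]
    (A : Matrix n n R) {i j : n} (hij : i ≠ j) (b c : n → R) :
    (A.updateCol i b).updateCol j c = (A.updateCol j c).updateCol i b := by
  ext p q
  by_cases h1 : q = j <;> by_cases h2 : q = i <;>
    simp_all [Matrix.updateCol_apply]

lemma det_collapse {n : ℕ} (A : Matrix (Fin (n+1)) (Fin (n+1)) R) (j r : Fin (n+1))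
    (h : ∀ i, i ≠ r → A i j = 0) :
    Matrix.det A = (-1) ^ ((r : ℕ) + (j : ℕ)) * A r j *
      Matrix.det (A.submatrix r.succAbove j.succAbove) := by
  rw [Matrix.det_succ_column A j]
  exact Finset.sum_eq_single r (fun i _ hi => by rw [h i hi]; ring) (by simp)

lemma det_double_single {m : ℕ} (p q : Fin (m+2)) :
    Matrix.det (((1 : Matrix (Fin (m+2)) (Fin (m+2)) R).updateCol (Fin.last (m+1))
        (Pi.single q 1)).updateCol 0 (Pi.single p 1))
    = if p = 0 ∧ q = Fin.last (m+1) then 1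
      else if p = Fin.last (m+1) ∧ q = 0 then -1 else 0 := by
  have h0l : (0 : Fin (m+2)) ≠ Fin.last (m+1) := by simp [Fin.ext_iff]
  by_cases hp0 : p = 0
  · subst hp0
    by_cases hql : q = Fin.last (m+1)
    · subst hql
      rw [if_pos ⟨rfl, rfl⟩]
      have h1 : (((1 : Matrix (Fin (m+2)) (Fin (m+2)) R).updateCol (Fin.last (m+1))
          (Pi.single (Fin.last (m+1)) 1)).updateCol 0 (Pi.single 0 1)) = 1 := by
        ext i j
        simp only [Matrix.updateCol_apply, Matrix.one_apply, Pi.single_apply]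
        split_ifs <;> simp_all [Fin.ext_iff, -Fin.val_eq_zero_iff] <;> omega
      rw [h1, Matrix.det_one]
    · rw [if_neg (fun h => hql h.2), if_neg (fun h => h0l h.1)]
      by_cases hq0 : q = 0
      · subst hq0
        exact Matrix.det_zero_of_column_eq h0l (fun i => by
          simp only [Matrix.updateCol_apply, Pi.single_apply]
          split_ifs <;> simp_all [Fin.ext_iff, -Fin.val_eq_zero_iff] <;> omega)
      · exact Matrix.det_zero_of_column_eq (Ne.symm hql) (fun i => by
          simp only [Matrix.updateCol_apply, Matrix.one_apply, Pi.single_apply]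
          split_ifs <;> simp_all [Fin.ext_iff, -Fin.val_eq_zero_iff] <;> omega)
  · by_cases hpl : p = Fin.last (m+1)
    · subst hpl
      by_cases hq0 : q = 0
      · subst hq0
        rw [if_neg (fun h => hp0 h.1), if_pos ⟨rfl, rfl⟩]
        rw [det_collapse _ 0 (Fin.last (m+1)) (fun i hi => by
          simp [Matrix.updateCol_apply, Pi.single_apply, hi])]
        rw [det_collapse _ (Fin.last m) 0 (fun i hi => by
          simp only [Matrix.submatrix_apply, Matrix.updateCol_apply, Matrix.one_apply,
            Pi.single_apply]
          split_ifs <;> simp_all [Fin.ext_iff, Fin.succAbove, Fin.lt_def, -Fin.val_eq_zero_iff] <;> split_ifs at * <;> simp_all <;> omega)]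
        have e3 : (((((1 : Matrix (Fin (m+2)) (Fin (m+2)) R).updateCol (Fin.last (m+1))
              (Pi.single 0 1)).updateCol 0 (Pi.single (Fin.last (m+1)) 1)).submatrix
              (Fin.last (m+1)).succAbove (Fin.succAbove 0)).submatrix
              (Fin.succAbove 0) (Fin.last m).succAbove) = (1 : Matrix (Fin m) (Fin m) R) := by
          ext i j
          simp only [Matrix.submatrix_apply, Matrix.updateCol_apply, Matrix.one_apply,
            Pi.single_apply, Fin.succAbove, Fin.lt_def]
          split_ifs <;> simp_all [Fin.ext_iff, -Fin.val_eq_zero_iff] <;> omega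
        rw [e3, Matrix.det_one]
        have e1 : (((1 : Matrix (Fin (m+2)) (Fin (m+2)) R).updateCol (Fin.last (m+1))
            (Pi.single 0 1)).updateCol 0 (Pi.single (Fin.last (m+1)) 1)) (Fin.last (m+1)) 0
            = 1 := by
          simp [Matrix.updateCol_apply, Pi.single_apply]
        have e2 : ((((1 : Matrix (Fin (m+2)) (Fin (m+2)) R).updateCol (Fin.last (m+1))
            (Pi.single 0 1)).updateCol 0 (Pi.single (Fin.last (m+1)) 1)).submatrix
            (Fin.last (m+1)).succAbove (Fin.succAbove 0)) 0 (Fin.last m) = 1 := by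
          simp only [Matrix.submatrix_apply, Matrix.updateCol_apply, Matrix.one_apply,
            Pi.single_apply, Fin.succAbove, Fin.lt_def]
          split_ifs <;> simp_all [Fin.ext_iff, -Fin.val_eq_zero_iff] <;> omega
        rw [e1, e2]
        simp only [Fin.val_last, Fin.val_zero, mul_one, add_zero, zero_add, one_mul]
        rw [← pow_add]
        exact Odd.neg_one_pow ⟨m, by ring⟩
      · rw [if_neg (fun h => hp0 h.1), if_neg (fun h => hq0 h.2)]
        by_cases hql : q = Fin.last (m+1)
        · subst hql
          exact Matrix.det_zero_of_column_eq h0l (fun i => by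
            simp only [Matrix.updateCol_apply, Matrix.one_apply, Pi.single_apply]
            split_ifs <;> simp_all [Fin.ext_iff, -Fin.val_eq_zero_iff] <;> omega)
        · exact Matrix.det_zero_of_column_eq (Ne.symm hql) (fun i => by
            simp only [Matrix.updateCol_apply, Matrix.one_apply, Pi.single_apply]
            split_ifs <;> simp_all [Fin.ext_iff, -Fin.val_eq_zero_iff] <;> omega)
    · rw [if_neg (fun h => hp0 h.1), if_neg (fun h => hpl h.1)]
      exact Matrix.det_zero_of_column_eq (Ne.symm hp0) (fun i => by
        simp only [Matrix.updateCol_apply, Matrix.one_apply, Pi.single_apply]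
        split_ifs <;> simp_all [Fin.ext_iff, -Fin.val_eq_zero_iff] <;> omega)

lemma det_X {m : ℕ} (v w : Fin (m+2) → R) :
    Matrix.det (((1 : Matrix (Fin (m+2)) (Fin (m+2)) R).updateCol 0 v).updateCol
        (Fin.last (m+1)) w)
    = v 0 * w (Fin.last (m+1)) - v (Fin.last (m+1)) * w 0 := by
  have h0l : (0 : Fin (m+2)) ≠ Fin.last (m+1) := by simp [Fin.ext_iff]
  have hv : v = ∑ p : Fin (m+2), v p • (Pi.single p 1 : Fin (m+2) → R) := by
    ext j; simp [Pi.single_apply, Finset.sum_ite_eq' Finset.univ j v]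
  have hw : w = ∑ q : Fin (m+2), w q • (Pi.single q 1 : Fin (m+2) → R) := by
    ext j; simp [Pi.single_apply, Finset.sum_ite_eq' Finset.univ j w]
  rw [← Matrix.cramer_apply]
  conv_lhs => rw [hw]
  rw [map_sum]
  simp only [LinearMap.map_smul, Finset.sum_apply, Pi.smul_apply, smul_eq_mul,
    Matrix.cramer_apply]
  have step : ∀ q : Fin (m+2),
      Matrix.det (((1 : Matrix (Fin (m+2)) (Fin (m+2)) R).updateCol 0 v).updateCol
        (Fin.last (m+1)) (Pi.single q 1))
      = if q = Fin.last (m+1) then v 0 else if q = 0 then -(v (Fin.last (m+1))) else 0 := by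
    intro q
    rw [updateColumn_comm _ h0l, ← Matrix.cramer_apply]
    conv_lhs => rw [hv, map_sum]
    simp only [LinearMap.map_smul, Finset.sum_apply, Pi.smul_apply, smul_eq_mul,
      Matrix.cramer_apply, det_double_single]
    by_cases hql : q = Fin.last (m+1)
    · subst hql
      rw [if_pos rfl, Finset.sum_eq_single 0 (fun p _ hp => by
        rw [if_neg (fun h => hp h.1), if_neg (fun h => h0l h.2.symm), mul_zero]) (by simp)]
      simp
    · by_cases hq0 : q = 0
      · subst hq0
        rw [if_neg hql, if_pos rfl,
          Finset.sum_eq_single (Fin.last (m+1)) (fun p _ hp => by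
            rw [if_neg (fun h => hql h.2), if_neg (fun h => hp h.1), mul_zero]) (by simp)]
        rw [if_neg (fun h => h0l h.1.symm), if_pos ⟨rfl, rfl⟩]
        ring
      · rw [if_neg hql, if_neg hq0]
        apply Finset.sum_eq_zero
        intro p _
        rw [if_neg (fun h => hql h.2), if_neg (fun h => hq0 h.2), mul_zero]
  simp only [step]
  rw [Finset.sum_eq_add_of_mem (Fin.last (m+1)) 0 (Finset.mem_univ _) (Finset.mem_univ _)
    (Ne.symm h0l) ?_]
  · rw [if_pos rfl, if_neg h0l, if_pos rfl]; ring
  · intro q _ hq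
    rw [if_neg (fun h => hq.1 h), if_neg (fun h => hq.2 h), mul_zero]

-- det of M with col 0 ↦ single (m) (detM), col last ↦ single (last) (detM)
lemma det_Y {m : ℕ} (M : Matrix (Fin (m+2)) (Fin (m+2)) R) (d : R) :
    Matrix.det ((M.updateCol 0 (Pi.single ((Fin.last m).castSucc) d)).updateCol
        (Fin.last (m+1)) (Pi.single (Fin.last (m+1)) d))
    = (-1) ^ m * d * d *
      Matrix.det (M.submatrix (fun i : Fin m => i.castSucc.castSucc)
        (fun j : Fin m => j.succ.castSucc)) := by
  have h0l : (0 : Fin (m+2)) ≠ Fin.last (m+1) := by simp [Fin.ext_iff]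
  set Y := (M.updateCol 0 (Pi.single ((Fin.last m).castSucc) d)).updateCol
      (Fin.last (m+1)) (Pi.single (Fin.last (m+1)) d) with hY
  have hcol0 : ∀ i, i ≠ (Fin.last m).castSucc → Y i 0 = 0 := by
    intro i hi
    simp [hY, Matrix.updateCol_apply, Ne.symm h0l, Pi.single_apply, hi]
  rw [det_collapse Y 0 ((Fin.last m).castSucc) hcol0]
  have e1 : Y ((Fin.last m).castSucc) 0 = d := by
    simp [hY, Matrix.updateCol_apply, Ne.symm h0l, Pi.single_apply]
  set Y1 := Y.submatrix ((Fin.last m).castSucc).succAbove (Fin.succAbove 0) with hY1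
  have hcol1 : ∀ i, i ≠ Fin.last m → Y1 i (Fin.last m) = 0 := by
    intro i hi
    have hcol : Fin.succAbove 0 (Fin.last m) = Fin.last (m+1) := by
      simp [Fin.succAbove, Fin.ext_iff]
    simp only [hY1, Matrix.submatrix_apply, hcol]
    have : ((Fin.last m).castSucc).succAbove i ≠ Fin.last (m+1) := by
      simp only [Fin.succAbove, Fin.ext_iff, Fin.lt_def] at *
      split_ifs <;> simp_all [Fin.ext_iff, -Fin.val_eq_zero_iff] <;> omega
    simp [hY, Matrix.updateCol_apply, Pi.single_apply, this]
  rw [det_collapse Y1 (Fin.last m) (Fin.last m) hcol1]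
  have e2 : Y1 (Fin.last m) (Fin.last m) = d := by
    have h1 : ((Fin.last m).castSucc).succAbove (Fin.last m) = Fin.last (m+1) := by
      simp [Fin.succAbove, Fin.ext_iff, Fin.lt_def]
    have h2 : Fin.succAbove 0 (Fin.last m) = Fin.last (m+1) := by
      simp [Fin.succAbove, Fin.ext_iff]
    simp [hY1, h1, h2, hY, Matrix.updateCol_apply, Pi.single_apply]
  have e3 : Y1.submatrix (Fin.last m).succAbove (Fin.last m).succAbove
      = M.submatrix (fun i : Fin m => i.castSucc.castSucc) (fun j : Fin m => j.succ.castSucc) := by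
    ext i j
    have hr : ((Fin.last m).castSucc).succAbove ((Fin.last m).succAbove i)
        = i.castSucc.castSucc := by
      rw [Fin.succAbove_last]
      exact Fin.succAbove_castSucc_of_lt _ _ (Fin.castSucc_lt_last i)
    have hc : Fin.succAbove 0 ((Fin.last m).succAbove j) = j.succ.castSucc := by
      rw [Fin.succAbove_last, Fin.succAbove_zero, Fin.succ_castSucc]
    have hc0 : j.succ.castSucc ≠ (0 : Fin (m+2)) := by
      simp only [ne_eq, Fin.ext_iff, Fin.coe_castSucc, Fin.val_succ, Fin.val_zero]
      omega
    have hcl : j.succ.castSucc ≠ Fin.last (m+1) := by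
      simp only [ne_eq, Fin.ext_iff, Fin.coe_castSucc, Fin.val_succ, Fin.val_last]
      omega
    simp [hY1, hY, hr, hc, Matrix.updateCol_apply, hc0, hcl,
      (Fin.castSucc_lt_last j).ne, Fin.succ_ne_zero, Fin.succ_castSucc, -Fin.castSucc_succ]
  rw [e1, e2, e3]
  have h2 : (-1 : R) ^ (m + m) = 1 := by
    rw [← two_mul, pow_mul]; norm_num
  simp only [Fin.coe_castSucc, Fin.val_last, Fin.val_zero, add_zero, h2]
  ring

lemma mulX {m : ℕ} (M : Matrix (Fin (m+2)) (Fin (m+2)) R) :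
    M * (((1 : Matrix (Fin (m+2)) (Fin (m+2)) R).updateCol 0
          (fun p => M.adjugate p ((Fin.last m).castSucc))).updateCol
        (Fin.last (m+1)) (fun p => M.adjugate p (Fin.last (m+1))))
    = (M.updateCol 0 (Pi.single ((Fin.last m).castSucc) M.det)).updateCol
        (Fin.last (m+1)) (Pi.single (Fin.last (m+1)) M.det) := by
  have h0l : (0 : Fin (m+2)) ≠ Fin.last (m+1) := by simp [Fin.ext_iff]
  ext i j
  rw [Matrix.mul_apply]
  by_cases hjl : j = Fin.last (m+1)
  · subst hjl
    have : ∀ p, (((1 : Matrix (Fin (m+2)) (Fin (m+2)) R).updateCol 0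
          (fun p => M.adjugate p ((Fin.last m).castSucc))).updateCol
        (Fin.last (m+1)) (fun p => M.adjugate p (Fin.last (m+1)))) p (Fin.last (m+1))
        = M.adjugate p (Fin.last (m+1)) := by
      intro p; simp [Matrix.updateCol_apply]
    simp only [this]
    have hmadj : (M * M.adjugate) i (Fin.last (m+1)) = (M.det • (1 : Matrix _ _ R)) i
        (Fin.last (m+1)) := by rw [Matrix.mul_adjugate]
    rw [Matrix.mul_apply] at hmadj
    rw [hmadj]
    simp [Matrix.updateCol_apply, Matrix.one_apply, Pi.single_apply]
  · by_cases hj0 : j = 0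
    · subst hj0
      have : ∀ p, (((1 : Matrix (Fin (m+2)) (Fin (m+2)) R).updateCol 0
            (fun p => M.adjugate p ((Fin.last m).castSucc))).updateCol
          (Fin.last (m+1)) (fun p => M.adjugate p (Fin.last (m+1)))) p 0
          = M.adjugate p ((Fin.last m).castSucc) := by
        intro p; simp [Matrix.updateCol_apply, Ne.symm h0l]
      simp only [this]
      have hmadj : (M * M.adjugate) i ((Fin.last m).castSucc) = (M.det • (1 : Matrix _ _ R)) i
          ((Fin.last m).castSucc) := by rw [Matrix.mul_adjugate]
      rw [Matrix.mul_apply] at hmadj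
      rw [hmadj]
      simp [Matrix.updateCol_apply, Ne.symm h0l, Matrix.one_apply, Pi.single_apply]
    · have : ∀ p, (((1 : Matrix (Fin (m+2)) (Fin (m+2)) R).updateCol 0
            (fun p => M.adjugate p ((Fin.last m).castSucc))).updateCol
          (Fin.last (m+1)) (fun p => M.adjugate p (Fin.last (m+1)))) p j
          = (1 : Matrix (Fin (m+2)) (Fin (m+2)) R) p j := by
        intro p; simp [Matrix.updateCol_apply, hjl, hj0]
      simp only [this]
      have h1 : (M * (1 : Matrix (Fin (m+2)) (Fin (m+2)) R)) i j = M i j := by rw [mul_one]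
      rw [Matrix.mul_apply] at h1
      rw [h1]
      simp [Matrix.updateCol_apply, hjl, hj0]

theorem dj_aux {m : ℕ} {S : Type*} [CommRing S] [IsDomain S]
    (M : Matrix (Fin (m+2)) (Fin (m+2)) S) (hM : M.det ≠ 0) :
    Matrix.det (M.submatrix (Fin.succAbove ((Fin.last m).castSucc)) (Fin.succAbove 0)) *
      Matrix.det (M.submatrix (Fin.succAbove (Fin.last (m+1))) (Fin.succAbove (Fin.last (m+1))))
    - Matrix.det (M.submatrix (Fin.succAbove ((Fin.last m).castSucc))
          (Fin.succAbove (Fin.last (m+1)))) *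
      Matrix.det (M.submatrix (Fin.succAbove (Fin.last (m+1))) (Fin.succAbove 0))
    = M.det * Matrix.det (M.submatrix (fun i : Fin m => i.castSucc.castSucc)
        (fun j : Fin m => j.succ.castSucc)) := by
  have key := congrArg Matrix.det (mulX M)
  rw [Matrix.det_mul, det_X, det_Y] at key
  have hadj : ∀ i j : Fin (m+2), M.adjugate i j
      = (-1) ^ ((j : ℕ) + (i : ℕ)) * Matrix.det (M.submatrix j.succAbove i.succAbove) :=
    fun i j => Matrix.adjugate_fin_succ_eq_det_submatrix M i j
  rw [hadj, hadj, hadj, hadj] at key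
  simp only [Fin.coe_castSucc, Fin.val_last, Fin.val_zero, add_zero] at key
  set A1 := Matrix.det (M.submatrix (Fin.succAbove ((Fin.last m).castSucc)) (Fin.succAbove 0))
  set A2 := Matrix.det (M.submatrix (Fin.succAbove (Fin.last (m+1)))
      (Fin.succAbove (Fin.last (m+1))))
  set A3 := Matrix.det (M.submatrix (Fin.succAbove ((Fin.last m).castSucc))
      (Fin.succAbove (Fin.last (m+1))))
  set A4 := Matrix.det (M.submatrix (Fin.succAbove (Fin.last (m+1))) (Fin.succAbove 0))
  set I := Matrix.det (M.submatrix (fun i : Fin m => i.castSucc.castSucc)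
      (fun j : Fin m => j.succ.castSucc))
  -- key : det M * ((-1)^m * A1 * ((-1)^(m+1+(m+1)) * A2) - (-1)^(m+(m+1)) * A3 * ((-1)^(m+1) * A4))
  --        = (-1)^m * det M * det M * I
  have hs : (-1 : S) ^ (m + 1 + (m + 1)) = 1 := by
    rw [show m + 1 + (m + 1) = 2 * (m + 1) by ring, pow_mul]; norm_num
  have hs2 : (-1 : S) ^ (m + (m + 1)) = -(-1 : S) ^ (m + m) := by
    rw [show m + (m + 1) = (m + m) + 1 by ring, pow_succ]; ring
  have hs3 : (-1 : S) ^ (m + m) = 1 := by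
    rw [show m + m = 2 * m by ring, pow_mul]; norm_num
  have hcancel : ((-1 : S) ^ m * M.det) ≠ 0 := by
    intro h
    rcases mul_eq_zero.mp h with h | h
    · exact (pow_ne_zero m (by norm_num : (-1 : S) ≠ 0)) h
    · exact hM h
  apply mul_left_cancel₀ hcancel
  rw [hs, hs2, hs3] at key
  linear_combination key

end JacobiAux

set_option maxHeartbeats 1600000 in
theorem dj {m : ℕ} {R : Type*} [CommRing R] (M : Matrix (Fin (m+2)) (Fin (m+2)) R) :
    Matrix.det (M.submatrix (Fin.succAbove ((Fin.last m).castSucc)) (Fin.succAbove 0)) *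
      Matrix.det (M.submatrix (Fin.succAbove (Fin.last (m+1))) (Fin.succAbove (Fin.last (m+1))))
    - Matrix.det (M.submatrix (Fin.succAbove ((Fin.last m).castSucc))
          (Fin.succAbove (Fin.last (m+1)))) *
      Matrix.det (M.submatrix (Fin.succAbove (Fin.last (m+1))) (Fin.succAbove 0))
    = M.det * Matrix.det (M.submatrix (fun i : Fin m => i.castSucc.castSucc)
        (fun j : Fin m => j.succ.castSucc)) := by
  set N : Matrix (Fin (m+2)) (Fin (m+2)) (MvPolynomial (Fin (m+2) × Fin (m+2)) ℤ) :=
    Matrix.of fun i j => MvPolynomial.X (i, j) with hN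
  have hNdet : N.det ≠ 0 := by
    intro h
    have h2 := congrArg (MvPolynomial.eval
      (fun p : Fin (m+2) × Fin (m+2) => if p.1 = p.2 then (1 : ℤ) else 0)) h
    rw [RingHom.map_det, RingHom.mapMatrix_apply] at h2
    have h3 : (N.map (MvPolynomial.eval
        (fun p : Fin (m+2) × Fin (m+2) => if p.1 = p.2 then (1 : ℤ) else 0)))
        = (1 : Matrix (Fin (m+2)) (Fin (m+2)) ℤ) := by
      ext i j
      simp [hN, Matrix.one_apply, Matrix.map_apply]
    rw [h3, Matrix.det_one] at h2
    simp at h2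
  have key := dj_aux N hNdet
  set φ := MvPolynomial.eval₂Hom (Int.castRingHom R) (fun p : Fin (m+2) × Fin (m+2) =>
    M p.1 p.2) with hφ
  have hmap : N.map φ = M := by
    ext i j
    simp [hN, hφ, Matrix.map_apply]
  have h2 := congrArg φ key
  simp only [map_sub, _root_.map_mul, RingHom.map_det, RingHom.mapMatrix_apply,
    ← Matrix.submatrix_map, hmap] at h2
  exact h2

/-- The Casoratian `C(f₁,…,f_m)(z) = det (f_i(z+j-1))` of a family of functions
`ℤ → F` (rows indexed by `i`, columns by `j`; here `i j : Fin m` are 0-indexed). -/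
noncomputable def casoratian {F : Type*} [Field F] {m : ℕ} (f : Fin m → ℤ → F) : ℤ → F :=
  fun z => Matrix.det (Matrix.of fun i j : Fin m => f i (z + (j : ℕ)))

set_option maxHeartbeats 1600000 in
/-- Jacobi identity for Casoratians:
`[C_k(χ), C_{k+1}] = -(T C_k) · C_{k+1}(χ)`, where `C_k = C(f₁,…,f_k)`,
`C_k(χ) = C(f₁,…,f_k,χ)`, `(Tf)(z) = f(z+1)` and `[A,B] = A·(TB) - B·(TA)`. -/
theorem casoratian_jacobi_identity {F : Type*} [Field F] (k : ℕ)
    (f : Fin (k + 1) → ℤ → F) (χ : ℤ → F) :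
    ∀ z : ℤ,
      casoratian (Fin.snoc (fun i : Fin k => f i.castSucc) χ) z * casoratian f (z + 1)
        - casoratian f z * casoratian (Fin.snoc (fun i : Fin k => f i.castSucc) χ) (z + 1)
      = -(casoratian (fun i : Fin k => f i.castSucc) (z + 1)) * casoratian (Fin.snoc f χ) z := by
  intro z
  set M : Matrix (Fin (k+2)) (Fin (k+2)) F :=
    Matrix.of fun i j : Fin (k+2) => (Fin.snoc f χ : Fin (k+2) → ℤ → F) i (z + (j : ℕ)) with hM
  have hrow : ∀ i : Fin (k+1),
      (Fin.snoc f χ : Fin (k+2) → ℤ → F) (((Fin.last k).castSucc).succAbove i)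
      = (Fin.snoc (fun i : Fin k => f i.castSucc) χ : Fin (k+1) → ℤ → F) i := by
    intro i
    induction i using Fin.lastCases with
    | last =>
      rw [Fin.succAbove_castSucc_self, Fin.succ_last]
      simp
    | cast i =>
      rw [Fin.succAbove_castSucc_of_lt _ _ (Fin.castSucc_lt_last i)]
      simp
  have hcol1 : ∀ j : Fin (k+1), (((Fin.succAbove 0 j : Fin (k+2)) : ℕ) : ℤ) = (j : ℕ) + 1 := by
    intro j
    rw [Fin.succAbove_zero]
    simp
  have E1 : M.submatrix (Fin.succAbove ((Fin.last k).castSucc)) (Fin.succAbove 0)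
      = Matrix.of fun i j : Fin (k+1) =>
          (Fin.snoc (fun i : Fin k => f i.castSucc) χ : Fin (k+1) → ℤ → F) i ((z+1) + (j : ℕ)) := by
    ext i j
    rw [Matrix.submatrix_apply, hM, Matrix.of_apply, hrow, Matrix.of_apply]
    rw [show z + ((Fin.succAbove 0 j : Fin (k+2)) : ℕ) = (z+1) + (j : ℕ) by
      rw [hcol1 j]; ring]
  have E2 : M.submatrix (Fin.succAbove (Fin.last (k+1))) (Fin.succAbove (Fin.last (k+1)))
      = Matrix.of fun i j : Fin (k+1) => f i (z + (j : ℕ)) := by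
    ext i j
    simp [hM, Fin.succAbove_last]
  have E3 : M.submatrix (Fin.succAbove ((Fin.last k).castSucc)) (Fin.succAbove (Fin.last (k+1)))
      = Matrix.of fun i j : Fin (k+1) =>
          (Fin.snoc (fun i : Fin k => f i.castSucc) χ : Fin (k+1) → ℤ → F) i (z + (j : ℕ)) := by
    ext i j
    rw [Matrix.submatrix_apply, hM, Matrix.of_apply]
    rw [show ((Fin.last k).castSucc.succAbove i : Fin (k+2)) = (Fin.last k).castSucc.succAbove i from rfl]
    have := congrFun (hrow i) (z + ((Fin.succAbove (Fin.last (k+1)) j : Fin (k+2)) : ℕ))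
    rw [this]
    simp [Fin.succAbove_last]
  have E4 : M.submatrix (Fin.succAbove (Fin.last (k+1))) (Fin.succAbove 0)
      = Matrix.of fun i j : Fin (k+1) => f i ((z+1) + (j : ℕ)) := by
    ext i j
    simp only [Matrix.submatrix_apply, hM, Matrix.of_apply, Fin.succAbove_last,
      Fin.snoc_castSucc, Matrix.of_apply]
    rw [show z + ((Fin.succAbove 0 j : Fin (k+2)) : ℕ) = (z+1) + (j : ℕ) by
      rw [hcol1 j]; ring]
  have E6 : M.submatrix (fun i : Fin k => i.castSucc.castSucc)
        (fun j : Fin k => j.succ.castSucc)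
      = Matrix.of fun i j : Fin k => f i.castSucc ((z+1) + (j : ℕ)) := by
    ext i j
    rw [Matrix.submatrix_apply, hM, Matrix.of_apply]
    rw [show z + ((j.succ.castSucc : Fin (k+2)) : ℕ) = (z+1) + (j : ℕ) by
      simp; ring]
    simp
  have h := dj M
  rw [E1, E2, E3, E4, E6] at h
  have hdetM : M.det = casoratian (Fin.snoc f χ) z := rfl
  rw [hdetM] at h
  show casoratian _ z * casoratian f (z+1) - casoratian f z * casoratian _ (z+1) = _
  unfold casoratian
  unfold casoratian at h
  linear_combination -h
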